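/- If A is positive semidefinite with respect to the M_f inner product (i.e., xᵀ M_f A x ≥ 0 for all x), then C(A) = R A I is positive semidefinite with respect to the M_c inner product. -/

import Mathlib

open Matrix

lemma quad_form_pull {nc nf : ℕ} (B : Matrix (Fin nf) (Fin nf) ℝ)
    (I : Matrix (Fin nf) (Fin nc) ℝ) (u : Fin nc → ℝ) :
    u ⬝ᵥ (Iᵀ * (B * I)) *ᵥ u = (I *ᵥ u) ⬝ᵥ B *ᵥ (I *ᵥ u) := by
  rw [← Matrix.mulVec_mulVec, ← Matrix.mulVec_mulVec, Matrix.dotProduct_mulVec,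
    Matrix.vecMul_transpose]

lemma Mc_posdef {nc nf : ℕ}
    (Mf : Matrix (Fin nf) (Fin nf) ℝ) (hMf : Mf.PosDef)
    (I : Matrix (Fin nf) (Fin nc) ℝ) (hI : Function.Injective I.mulVec) :
    (Iᵀ * Mf * I).PosDef := by
  rw [Matrix.posDef_iff_dotProduct_mulVec]
  constructor
  · show (Iᵀ * Mf * I)ᴴ = Iᵀ * Mf * I
    have hs : Mfᵀ = Mf := by simpa using hMf.1.eq
    simp [Matrix.conjTranspose_mul, Matrix.mul_assoc, hs]
  · intro x hx
    have hne : I.mulVec x ≠ 0 := fun h => hx (hI (by simpa using h))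
    have h := (Matrix.posDef_iff_dotProduct_mulVec.mp hMf).2 (x := I.mulVec x) hne
    have : x ⬝ᵥ (Iᵀ * Mf * I) *ᵥ x = (I *ᵥ x) ⬝ᵥ Mf *ᵥ (I *ᵥ x) := by
      rw [Matrix.mul_assoc]; exact quad_form_pull Mf I x
    simp only [star_trivial] at h ⊢
    rw [this]
    simpa using h

/-- If `A` is positive semidefinite with respect to the `M_f` inner product, then
`C(A) = R A I` is positive semidefinite with respect to the `M_c` inner product. -/
theorem coarsened_operator_posSemidef {nc nf : ℕ}
    (Mf : Matrix (Fin nf) (Fin nf) ℝ) (hMf : Mf.PosDef)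
    (I : Matrix (Fin nf) (Fin nc) ℝ) (hI : Function.Injective I.mulVec)
    (A : Matrix (Fin nf) (Fin nf) ℝ)
    (hA : ∀ x : Fin nf → ℝ, 0 ≤ x ⬝ᵥ ((Mf * A).mulVec x)) :
    ∀ u : Fin nc → ℝ,
      0 ≤ u ⬝ᵥ (((Iᵀ * Mf * I) * (((Iᵀ * Mf * I)⁻¹ * Iᵀ * Mf) * A * I)).mulVec u) := by
  intro u
  have hMc := Mc_posdef Mf hMf I hI
  have hdet : IsUnit (Iᵀ * Mf * I).det := isUnit_iff_ne_zero.mpr (ne_of_gt hMc.det_pos)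
  have hinv : (Iᵀ * Mf * I) * (Iᵀ * Mf * I)⁻¹ = 1 := Matrix.mul_nonsing_inv _ hdet
  have hmat : (Iᵀ * Mf * I) * (((Iᵀ * Mf * I)⁻¹ * Iᵀ * Mf) * A * I)
      = Iᵀ * ((Mf * A) * I) := by
    calc (Iᵀ * Mf * I) * (((Iᵀ * Mf * I)⁻¹ * Iᵀ * Mf) * A * I)
        = ((Iᵀ * Mf * I) * (Iᵀ * Mf * I)⁻¹) * (Iᵀ * ((Mf * A) * I)) := by
          simp only [Matrix.mul_assoc]
      _ = Iᵀ * ((Mf * A) * I) := by rw [hinv, one_mul]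
  rw [hmat, quad_form_pull]
  exact hA (I.mulVec u)
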